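/- Cancellation between convection of Q and the symmetric stress: let u : ℝ² → ℝ² be a smooth, compactly supported, divergence-free vector field (∂₁u₁ + ∂₂u₂ = 0), and let Q : ℝ² → M₃(ℝ) be a smooth compactly supported field of 3×3 real symmetric matrices. Then ∫_{ℝ²} Σ_{i=1}^{2} u_i · tr(∂_iQ · ΔQ) dx = ∫_{ℝ²} Σ_{i=1}^{2} Σ_{k=1}^{2} u_i · ∂_k( tr(∂_iQ · ∂_kQ) ) dx; in other words ⟨u·∇Q, ΔQ⟩_{L²} = ⟨u, div(∇Q⊙∇Q)⟩_{L²}, where (∇Q⊙∇Q)_{ik} := tr(∂_iQ ∂_kQ). -/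

import Mathlib

open MeasureTheory Matrix

noncomputable section

/-- Two-dimensional space `ℝ²`. -/
abbrev Spc : Type := EuclideanSpace ℝ (Fin 2)

/-- `3×3` real matrices. -/
abbrev Mat : Type := Matrix (Fin 3) (Fin 3) ℝ

/-- Canonical basis vectors of `ℝ²`. -/
def e2 (i : Fin 2) : Spc := EuclideanSpace.single i 1

/-- Partial derivative in the `i`-th spatial direction. -/
def pd (i : Fin 2) (φ : Spc → ℝ) (x : Spc) : ℝ := fderiv ℝ φ x (e2 i)

/-- Two-dimensional Laplacian `Δ = ∂₁² + ∂₂²`. -/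
def lap2 (φ : Spc → ℝ) (x : Spc) : ℝ := ∑ k : Fin 2, pd k (pd k φ) x

/-- Componentwise partial derivative of a matrix field. -/
def pdM (i : Fin 2) (Q : Spc → Mat) (x : Spc) : Mat :=
  Matrix.of fun a b => pd i (fun y => Q y a b) x

/-- Componentwise Laplacian of a matrix field. -/
def lapM (Q : Spc → Mat) (x : Spc) : Mat :=
  Matrix.of fun a b => lap2 (fun y => Q y a b) x

/-! ### Auxiliary lemmas -/

lemma aux_one_le : (1 : WithTop ℕ∞) ≤ ((⊤ : ℕ∞) : WithTop ℕ∞) := by norm_cast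
lemma aux_two_le : (2 : WithTop ℕ∞) ≤ ((⊤ : ℕ∞) : WithTop ℕ∞) := by norm_cast

lemma pd_contDiff {φ : Spc → ℝ} (h : ContDiff ℝ (⊤ : ℕ∞) φ) (i : Fin 2) :
    ContDiff ℝ (⊤ : ℕ∞) (pd i φ) := by
  have h1 : ContDiff ℝ (⊤ : ℕ∞) (fderiv ℝ φ) := h.fderiv_right (by simp)
  exact h1.clm_apply contDiff_const

lemma pd_supp {φ : Spc → ℝ} (h : HasCompactSupport φ) (i : Fin 2) :
    HasCompactSupport (pd i φ) := h.fderiv_apply ℝ (e2 i)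

lemma pd_mul {φ ψ : Spc → ℝ} (hφ : ContDiff ℝ (⊤ : ℕ∞) φ) (hψ : ContDiff ℝ (⊤ : ℕ∞) ψ)
    (i : Fin 2) (x : Spc) :
    pd i (fun y => φ y * ψ y) x = pd i φ x * ψ x + φ x * pd i ψ x := by
  unfold pd
  rw [fderiv_fun_mul (hφ.differentiable (by simp) x) (hψ.differentiable (by simp) x)]
  simp only [ContinuousLinearMap.add_apply, ContinuousLinearMap.smul_apply, smul_eq_mul]
  ring

lemma pd_sum {ι : Type*} (s : Finset ι) (f : ι → Spc → ℝ)
    (hf : ∀ j, ContDiff ℝ (⊤ : ℕ∞) (f j)) (i : Fin 2) (x : Spc) :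
    pd i (fun y => ∑ j ∈ s, f j y) x = ∑ j ∈ s, pd i (f j) x := by
  unfold pd
  rw [fderiv_fun_sum fun j _ => (hf j).differentiable (by simp) x]
  simp

lemma pd_comm {φ : Spc → ℝ} (h : ContDiff ℝ (⊤ : ℕ∞) φ) (i k : Fin 2) (x : Spc) :
    pd k (pd i φ) x = pd i (pd k φ) x := by
  have hd : ContDiff ℝ (⊤ : ℕ∞) (fderiv ℝ φ) := h.fderiv_right (by simp)
  have hda : DifferentiableAt ℝ (fderiv ℝ φ) x := (hd.differentiable (by simp)) x
  have hsymm := (h.contDiffAt (x := x)).isSymmSndFDerivAt (n := (⊤ : ℕ∞)) (by rw [minSmoothness_of_isRCLikeNormedField]; exact aux_two_le)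
  have calc1 : ∀ v w : Spc, fderiv ℝ (fun y => fderiv ℝ φ y v) x w
      = fderiv ℝ (fderiv ℝ φ) x w v := by
    intro v w
    rw [fderiv_clm_apply hda (differentiableAt_const v)]
    simp
  unfold pd
  rw [calc1, calc1, hsymm.eq]

lemma hcs_finsetSum {ι : Type*} (s : Finset ι) (f : ι → Spc → ℝ)
    (h : ∀ j ∈ s, HasCompactSupport (f j)) :
    HasCompactSupport (fun x => ∑ j ∈ s, f j x) := by
  classical
  induction s using Finset.induction_on with
  | empty => simp only [Finset.sum_empty]; exact HasCompactSupport.zero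
  | @insert j s hj ih =>
    simp only [Finset.sum_insert hj]
    exact (h _ (Finset.mem_insert_self _ _)).add
      (ih fun j hjs => h j (Finset.mem_insert_of_mem hjs))

lemma integral_pd_mul {f g : Spc → ℝ} (hf : ContDiff ℝ (⊤ : ℕ∞) f) (hfs : HasCompactSupport f)
    (hg : ContDiff ℝ (⊤ : ℕ∞) g) (i : Fin 2) :
    ∫ x : Spc, f x * pd i g x = - ∫ x : Spc, pd i f x * g x := by
  have h1 : Integrable (fun x : Spc => pd i f x * g x) :=
    ((pd_contDiff hf i).continuous.mul hg.continuous).integrable_of_hasCompactSupport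
      ((pd_supp hfs i).mul_right)
  have h2 : Integrable (fun x : Spc => f x * pd i g x) :=
    (hf.continuous.mul (pd_contDiff hg i).continuous).integrable_of_hasCompactSupport
      hfs.mul_right
  have h3 : Integrable (fun x : Spc => f x * g x) :=
    (hf.continuous.mul hg.continuous).integrable_of_hasCompactSupport hfs.mul_right
  exact integral_mul_fderiv_eq_neg_fderiv_mul_of_integrable h1 h2 h3
    (fun x _ => hf.differentiable (by simp) x) (fun x _ => hg.differentiable (by simp) x)

lemma trace_pdM_pdM (Q : Spc → Mat) (i k : Fin 2) (y : Spc) :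
    (pdM i Q y * pdM k Q y).trace
      = ∑ p : Fin 3 × Fin 3,
          pd i (fun z => Q z p.1 p.2) y * pd k (fun z => Q z p.2 p.1) y := by
  rw [Fintype.sum_prod_type]
  simp [Matrix.trace, Matrix.mul_apply, pdM, Matrix.diag]

lemma trace_pdM_lapM (Q : Spc → Mat) (i : Fin 2) (x : Spc) :
    (pdM i Q x * lapM Q x).trace
      = ∑ p : Fin 3 × Fin 3, ∑ k : Fin 2,
          pd i (fun z => Q z p.1 p.2) x * pd k (pd k (fun z => Q z p.2 p.1)) x := by
  rw [Fintype.sum_prod_type]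
  simp only [Matrix.trace, Matrix.mul_apply, pdM, lapM, lap2, Matrix.diag, Matrix.of_apply,
    Finset.mul_sum]

lemma pd_trace_pdM (Q : Spc → Mat) (hQ : ∀ a b, ContDiff ℝ (⊤ : ℕ∞) fun x => Q x a b)
    (i k : Fin 2) (x : Spc) :
    pd k (fun y => (pdM i Q y * pdM k Q y).trace) x
      = ∑ p : Fin 3 × Fin 3,
          (pd k (pd i (fun z => Q z p.1 p.2)) x * pd k (fun z => Q z p.2 p.1) x
            + pd i (fun z => Q z p.1 p.2) x * pd k (pd k (fun z => Q z p.2 p.1)) x) := by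
  have h1 : (fun y => (pdM i Q y * pdM k Q y).trace)
      = fun y => ∑ p : Fin 3 × Fin 3,
          pd i (fun z => Q z p.1 p.2) y * pd k (fun z => Q z p.2 p.1) y :=
    funext fun y => trace_pdM_pdM Q i k y
  rw [h1, pd_sum Finset.univ
    (fun (p : Fin 3 × Fin 3) (y : Spc) =>
      pd i (fun z => Q z p.1 p.2) y * pd k (fun z => Q z p.2 p.1) y)
    (fun p => (pd_contDiff (hQ p.1 p.2) i).mul (pd_contDiff (hQ p.2 p.1) k)) k x]
  exact Finset.sum_congr rfl fun p _ =>
    pd_mul (pd_contDiff (hQ p.1 p.2) i) (pd_contDiff (hQ p.2 p.1) k) k x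

/-- Derivative of the "energy density" `F = Σ_k tr(∂_kQ ∂_kQ)`. -/
lemma pd_energy (Q : Spc → Mat) (hQ : ∀ a b, ContDiff ℝ (⊤ : ℕ∞) fun x => Q x a b)
    (i : Fin 2) (x : Spc) :
    pd i (fun y => ∑ z : Fin 2 × Fin 3 × Fin 3,
        pd z.1 (fun w => Q w z.2.1 z.2.2) y * pd z.1 (fun w => Q w z.2.2 z.2.1) y) x
      = 2 * ∑ z : Fin 2 × Fin 3 × Fin 3,
          pd z.1 (pd i (fun w => Q w z.2.1 z.2.2)) x
            * pd z.1 (fun w => Q w z.2.2 z.2.1) x := by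
  rw [pd_sum Finset.univ
    (fun (z : Fin 2 × Fin 3 × Fin 3) (y : Spc) =>
      pd z.1 (fun w => Q w z.2.1 z.2.2) y * pd z.1 (fun w => Q w z.2.2 z.2.1) y)
    (fun z => (pd_contDiff (hQ z.2.1 z.2.2) z.1).mul (pd_contDiff (hQ z.2.2 z.2.1) z.1)) i x]
  have step : ∀ z : Fin 2 × Fin 3 × Fin 3,
      pd i (fun y => pd z.1 (fun w => Q w z.2.1 z.2.2) y
            * pd z.1 (fun w => Q w z.2.2 z.2.1) y) x
        = pd z.1 (pd i (fun w => Q w z.2.1 z.2.2)) x * pd z.1 (fun w => Q w z.2.2 z.2.1) x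
          + pd z.1 (fun w => Q w z.2.1 z.2.2) x * pd z.1 (pd i (fun w => Q w z.2.2 z.2.1)) x := by
    intro z
    rw [pd_mul (pd_contDiff (hQ z.2.1 z.2.2) z.1) (pd_contDiff (hQ z.2.2 z.2.1) z.1) i x,
      pd_comm (hQ z.2.1 z.2.2) z.1 i x, pd_comm (hQ z.2.2 z.2.1) z.1 i x]
  rw [Finset.sum_congr rfl fun z _ => step z, Finset.sum_add_distrib]
  have reindex : ∑ z : Fin 2 × Fin 3 × Fin 3,
      pd z.1 (fun w => Q w z.2.1 z.2.2) x * pd z.1 (pd i (fun w => Q w z.2.2 z.2.1)) x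
    = ∑ z : Fin 2 × Fin 3 × Fin 3,
        pd z.1 (pd i (fun w => Q w z.2.1 z.2.2)) x * pd z.1 (fun w => Q w z.2.2 z.2.1) x := by
    apply Fintype.sum_equiv ((Equiv.refl (Fin 2)).prodCongr (Equiv.prodComm (Fin 3) (Fin 3)))
    intro z
    simp [mul_comm]
  rw [reindex]
  ring

/-- **Cancellation between convection of `Q` and the symmetric stress**: for a
smooth compactly supported divergence-free vector field `u : ℝ² → ℝ²` and a
smooth compactly supported field `Q` of `3×3` real symmetric matrices,
`⟨u·∇Q, ΔQ⟩_{L²} = ⟨u, div(∇Q ⊙ ∇Q)⟩_{L²}`, i.e.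
`∫ Σᵢ uᵢ tr(∂ᵢQ ΔQ) dx = ∫ Σᵢ Σₖ uᵢ ∂ₖ(tr(∂ᵢQ ∂ₖQ)) dx`. -/
theorem convection_symmetric_stress_cancellation
    (u : Spc → Fin 2 → ℝ) (Q : Spc → Mat)
    (hu_smooth : ∀ i, ContDiff ℝ (⊤ : ℕ∞) fun x => u x i)
    (hu_supp : ∀ i, HasCompactSupport fun x => u x i)
    (hdiv : ∀ x, ∑ i : Fin 2, pd i (fun y => u y i) x = 0)
    (hQ_smooth : ∀ a b, ContDiff ℝ (⊤ : ℕ∞) fun x => Q x a b)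
    (hQ_supp : ∀ a b, HasCompactSupport fun x => Q x a b)
    (hQ_symm : ∀ x, (Q x)ᵀ = Q x) :
    ∫ x : Spc, ∑ i : Fin 2, u x i * (pdM i Q x * lapM Q x).trace
      = ∫ x : Spc, ∑ i : Fin 2, ∑ k : Fin 2,
          u x i * pd k (fun y => (pdM i Q y * pdM k Q y).trace) x := by
  classical
  -- the energy density F
  set F : Spc → ℝ := fun y => ∑ z : Fin 2 × Fin 3 × Fin 3,
      pd z.1 (fun w => Q w z.2.1 z.2.2) y * pd z.1 (fun w => Q w z.2.2 z.2.1) y with hF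
  have hFsmooth : ContDiff ℝ (⊤ : ℕ∞) F :=
    ContDiff.sum fun z _ =>
      (pd_contDiff (hQ_smooth z.2.1 z.2.2) z.1).mul (pd_contDiff (hQ_smooth z.2.2 z.2.1) z.1)
  -- pointwise identity
  have key : ∀ x : Spc,
      ∑ i : Fin 2, ∑ k : Fin 2, u x i * pd k (fun y => (pdM i Q y * pdM k Q y).trace) x
        = (∑ i : Fin 2, u x i * (pdM i Q x * lapM Q x).trace)
          + (1 / 2) * ∑ i : Fin 2, u x i * pd i F x := by
    intro x
    have expand : ∀ i : Fin 2,
        ∑ k : Fin 2, pd k (fun y => (pdM i Q y * pdM k Q y).trace) x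
          = (pdM i Q x * lapM Q x).trace + (1 / 2) * pd i F x := by
      intro i
      have h2 := pd_energy Q hQ_smooth i x
      have hsplit : ∑ k : Fin 2, pd k (fun y => (pdM i Q y * pdM k Q y).trace) x
          = (∑ k : Fin 2, ∑ p : Fin 3 × Fin 3,
              pd k (pd i (fun z => Q z p.1 p.2)) x * pd k (fun z => Q z p.2 p.1) x)
            + ∑ k : Fin 2, ∑ p : Fin 3 × Fin 3,
              pd i (fun z => Q z p.1 p.2) x * pd k (pd k (fun z => Q z p.2 p.1)) x := by
        rw [← Finset.sum_add_distrib]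
        refine Finset.sum_congr rfl fun k _ => ?_
        rw [pd_trace_pdM Q hQ_smooth i k x, Finset.sum_add_distrib]
      rw [hsplit]
      have hA : ∑ k : Fin 2, ∑ p : Fin 3 × Fin 3,
            pd k (pd i (fun z => Q z p.1 p.2)) x * pd k (fun z => Q z p.2 p.1) x
          = (1 / 2) * pd i F x := by
        rw [hF]
        rw [h2, Fintype.sum_prod_type]
        ring
      have hB : ∑ k : Fin 2, ∑ p : Fin 3 × Fin 3,
            pd i (fun z => Q z p.1 p.2) x * pd k (pd k (fun z => Q z p.2 p.1)) x
          = (pdM i Q x * lapM Q x).trace := by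
        rw [trace_pdM_lapM Q i x, Finset.sum_comm]
      rw [hA, hB]
      ring
    calc ∑ i : Fin 2, ∑ k : Fin 2, u x i * pd k (fun y => (pdM i Q y * pdM k Q y).trace) x
        = ∑ i : Fin 2, u x i * ∑ k : Fin 2, pd k (fun y => (pdM i Q y * pdM k Q y).trace) x := by
          simp only [Finset.mul_sum]
      _ = ∑ i : Fin 2, u x i * ((pdM i Q x * lapM Q x).trace + (1 / 2) * pd i F x) := by
          exact Finset.sum_congr rfl fun i _ => by rw [expand i]
      _ = (∑ i : Fin 2, u x i * (pdM i Q x * lapM Q x).trace)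
            + (1 / 2) * ∑ i : Fin 2, u x i * pd i F x := by
          rw [Finset.mul_sum, ← Finset.sum_add_distrib]
          exact Finset.sum_congr rfl fun i _ => by ring
  -- integrability facts
  have hL : Integrable (fun x : Spc => ∑ i : Fin 2, u x i * (pdM i Q x * lapM Q x).trace) := by
    have hc : Continuous fun x : Spc => ∑ i : Fin 2, u x i * (pdM i Q x * lapM Q x).trace := by
      refine continuous_finset_sum _ fun i _ => ((hu_smooth i).continuous.mul ?_)
      have : (fun x : Spc => (pdM i Q x * lapM Q x).trace)
          = fun x => ∑ p : Fin 3 × Fin 3, ∑ k : Fin 2,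
              pd i (fun z => Q z p.1 p.2) x * pd k (pd k (fun z => Q z p.2 p.1)) x :=
        funext fun x => trace_pdM_lapM Q i x
      rw [this]
      refine continuous_finset_sum _ fun p _ => continuous_finset_sum _ fun k _ =>
        ((pd_contDiff (hQ_smooth p.1 p.2) i).continuous.mul
          (pd_contDiff (pd_contDiff (hQ_smooth p.2 p.1) k) k).continuous)
    refine hc.integrable_of_hasCompactSupport ?_
    exact hcs_finsetSum _ _ fun i _ => (hu_supp i).mul_right
  have hD : Integrable (fun x : Spc => ∑ i : Fin 2, u x i * pd i F x) := by
    have hc : Continuous fun x : Spc => ∑ i : Fin 2, u x i * pd i F x :=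
      continuous_finset_sum _ fun i _ =>
        (hu_smooth i).continuous.mul (pd_contDiff hFsmooth i).continuous
    refine hc.integrable_of_hasCompactSupport ?_
    exact hcs_finsetSum _ _ fun i _ => (hu_supp i).mul_right
  -- the divergence-free integral vanishes
  have hzero : ∫ x : Spc, ∑ i : Fin 2, u x i * pd i F x = 0 := by
    have hint : ∀ i : Fin 2, Integrable (fun x : Spc => u x i * pd i F x) := fun i =>
      ((hu_smooth i).continuous.mul (pd_contDiff hFsmooth i).continuous).integrable_of_hasCompactSupport
        (hu_supp i).mul_right
    rw [integral_finset_sum _ fun i _ => hint i]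
    have hIBP : ∀ i : Fin 2, ∫ x : Spc, u x i * pd i F x
        = - ∫ x : Spc, pd i (fun y => u y i) x * F x :=
      fun i => integral_pd_mul (hu_smooth i) (hu_supp i) hFsmooth i
    rw [Finset.sum_congr rfl fun i _ => hIBP i]
    rw [Finset.sum_neg_distrib]
    have hint2 : ∀ i : Fin 2, Integrable (fun x : Spc => pd i (fun y => u y i) x * F x) :=
      fun i => ((pd_contDiff (hu_smooth i) i).continuous.mul hFsmooth.continuous).integrable_of_hasCompactSupport
        (pd_supp (hu_supp i) i).mul_right
    rw [← integral_finset_sum _ fun i _ => hint2 i]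
    have : (fun x : Spc => ∑ i : Fin 2, pd i (fun y => u y i) x * F x) = fun _ => (0 : ℝ) := by
      funext x
      rw [← Finset.sum_mul, hdiv x, zero_mul]
    rw [this]
    simp
  -- conclusion
  have hfun : (fun x : Spc => ∑ i : Fin 2, ∑ k : Fin 2,
        u x i * pd k (fun y => (pdM i Q y * pdM k Q y).trace) x)
      = fun x => (∑ i : Fin 2, u x i * (pdM i Q x * lapM Q x).trace)
          + (1 / 2) * ∑ i : Fin 2, u x i * pd i F x := funext key
  rw [hfun, integral_add hL (hD.const_mul _)]
  have hhalf : ∫ x : Spc, (1 / 2 : ℝ) * ∑ i : Fin 2, u x i * pd i F x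
      = (1 / 2 : ℝ) * ∫ x : Spc, ∑ i : Fin 2, u x i * pd i F x := by
    simpa using integral_smul ((1 : ℝ) / 2) (fun x : Spc => ∑ i : Fin 2, u x i * pd i F x)
  rw [hhalf, hzero]
  ring
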